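/- arXiv:1505.03593 — 3 statements merged into one kernel-verified Lean document; each statement's English description precedes it below -/
import Mathlib

section
/- Let K be a compact Hausdorff topological group acting continuously on compact Hausdorff spaces Y₁ and Y₂, with compact cross sections C₁ ⊆ Y₁ and C₂ ⊆ Y₂ (each containing exactly one point of every orbit). If φ : C₁ → C₂ is a homeomorphism such that Stab_K(y) = Stab_K(φ(y)) for all y ∈ C₁, then φ extends to a K-equivariant homeomorphism Φ : Y₁ → Y₂. -/
/-- Auxiliary: a continuous stabilizer-nondecreasing map from a compact cross section
extends to a continuous equivariant map. -/
theorem extend_aux {K : Type*} [Group K] [TopologicalSpace K] [IsTopologicalGroup K]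
    [CompactSpace K]
    {Y₁ Y₂ : Type*} [TopologicalSpace Y₁] [TopologicalSpace Y₂] [T2Space Y₁]
    [MulAction K Y₁] [MulAction K Y₂] [ContinuousSMul K Y₁] [ContinuousSMul K Y₂]
    (C₁ : Set Y₁) (hC₁c : IsCompact C₁)
    (hC₁ : ∀ y : Y₁, ∃! c, c ∈ C₁ ∧ c ∈ MulAction.orbit K y)
    (f : C₁ → Y₂) (hfc : Continuous f)
    (hf : ∀ c : C₁, MulAction.stabilizer K (c : Y₁) ≤ MulAction.stabilizer K (f c)) :
    ∃ Φ : Y₁ → Y₂, Continuous Φ ∧ ∀ (k : K) (c : C₁), Φ (k • (c : Y₁)) = k • f c := by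
  classical
  have welldef : ∀ (k k' : K) (c c' : C₁), k • (c : Y₁) = k' • (c' : Y₁) →
      k • f c = k' • f c' := by
    intro k k' c c' h
    have hc' : (c' : Y₁) ∈ MulAction.orbit K (c : Y₁) :=
      ⟨k'⁻¹ * k, by show (k'⁻¹ * k) • (c : Y₁) = (c' : Y₁); rw [mul_smul, h, inv_smul_smul]⟩
    have hcc : c = c' := by
      obtain ⟨d, -, hd⟩ := hC₁ (c : Y₁)
      have h1 := hd (c : Y₁) ⟨c.2, MulAction.mem_orbit_self _⟩
      have h2 := hd (c' : Y₁) ⟨c'.2, hc'⟩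
      exact Subtype.ext (h1.trans h2.symm)
    subst hcc
    have hstab : k'⁻¹ * k ∈ MulAction.stabilizer K (c : Y₁) := by
      rw [MulAction.mem_stabilizer_iff, mul_smul, h, inv_smul_smul]
    have hfs : (k'⁻¹ * k) • f c = f c := hf c hstab
    calc k • f c = k' • ((k'⁻¹ * k) • f c) := by rw [smul_smul, mul_inv_cancel_left]
      _ = k' • f c := by rw [hfs]
  choose g hg using fun y => (hC₁ y).exists
  have h2 : ∀ y : Y₁, ∃ k : K, k • y = g y := fun y => (hg y).2
  choose kf hkf using h2
  set Φ : Y₁ → Y₂ := fun y => (kf y)⁻¹ • f ⟨g y, (hg y).1⟩ with hΦdef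
  have spec : ∀ (k : K) (c : C₁), Φ (k • (c : Y₁)) = k • f c := by
    intro k c
    have h1 : (kf (k • (c : Y₁)) * k) • (c : Y₁) =
        (1 : K) • ((⟨g (k • (c : Y₁)), (hg _).1⟩ : C₁) : Y₁) := by
      rw [one_smul, mul_smul]; exact hkf _
    have h3 := welldef _ _ _ _ h1
    rw [one_smul] at h3
    show (kf (k • (c : Y₁)))⁻¹ • f ⟨g (k • (c : Y₁)), (hg _).1⟩ = k • f c
    rw [← h3, smul_smul, inv_mul_cancel_left]
  have : CompactSpace C₁ := isCompact_iff_compactSpace.mp hC₁c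
  set p : K × C₁ → Y₁ := fun x => x.1 • (x.2 : Y₁) with hpdef
  have hpc : Continuous p := continuous_fst.smul (continuous_subtype_val.comp continuous_snd)
  have hps : Function.Surjective p := by
    intro y
    refine ⟨((kf y)⁻¹, ⟨g y, (hg y).1⟩), ?_⟩
    show (kf y)⁻¹ • g y = y
    rw [← hkf y, inv_smul_smul]
  have hq : Topology.IsQuotientMap p := hpc.isClosedMap.isQuotientMap hpc hps
  have hcont : Continuous (Φ ∘ p) := by
    have he : Φ ∘ p = fun x : K × C₁ => x.1 • f x.2 := by
      funext x; exact spec x.1 x.2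
    rw [he]; exact continuous_fst.smul (hfc.comp continuous_snd)
  exact ⟨Φ, hq.continuous_iff.mpr hcont, spec⟩

/-- Let `K` be a compact Hausdorff topological group acting continuously on compact Hausdorff
spaces `Y₁` and `Y₂`, with compact cross sections `C₁ ⊆ Y₁` and `C₂ ⊆ Y₂` (each containing exactly
one point of every orbit).  If `φ : C₁ → C₂` is a homeomorphism preserving point stabilizers,
then `φ` extends to a `K`-equivariant homeomorphism `Φ : Y₁ → Y₂`. -/
theorem stmt_1 {K : Type*} [Group K] [TopologicalSpace K] [IsTopologicalGroup K]
    [CompactSpace K] [T2Space K]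
    {Y₁ Y₂ : Type*} [TopologicalSpace Y₁] [TopologicalSpace Y₂]
    [CompactSpace Y₁] [CompactSpace Y₂] [T2Space Y₁] [T2Space Y₂]
    [MulAction K Y₁] [MulAction K Y₂] [ContinuousSMul K Y₁] [ContinuousSMul K Y₂]
    (C₁ : Set Y₁) (C₂ : Set Y₂) (hC₁c : IsCompact C₁) (hC₂c : IsCompact C₂)
    (hC₁ : ∀ y : Y₁, ∃! c, c ∈ C₁ ∧ c ∈ MulAction.orbit K y)
    (hC₂ : ∀ y : Y₂, ∃! c, c ∈ C₂ ∧ c ∈ MulAction.orbit K y)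
    (φ : C₁ ≃ₜ C₂)
    (hφ : ∀ c : C₁, MulAction.stabilizer K (c : Y₁) = MulAction.stabilizer K (φ c : Y₂)) :
    ∃ Φ : Y₁ ≃ₜ Y₂, (∀ (k : K) (y : Y₁), Φ (k • y) = k • Φ y) ∧
      ∀ c : C₁, Φ (c : Y₁) = (φ c : Y₂) := by
  obtain ⟨Φ, hΦc, hΦ⟩ := extend_aux C₁ hC₁c hC₁ (fun c => (φ c : Y₂))
    (continuous_subtype_val.comp φ.continuous) (fun c => (hφ c).le)
  obtain ⟨Ψ, hΨc, hΨ⟩ := extend_aux C₂ hC₂c hC₂ (fun c => (φ.symm c : Y₁))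
    (continuous_subtype_val.comp φ.symm.continuous)
    (fun c => by rw [hφ (φ.symm c), φ.apply_symm_apply])
  have hrep₁ : ∀ y : Y₁, ∃ (k : K) (c : C₁), y = k • (c : Y₁) := by
    intro y
    obtain ⟨c, ⟨hc, k, hk⟩, -⟩ := hC₁ y
    exact ⟨k⁻¹, ⟨c, hc⟩, by rw [Subtype.coe_mk, ← hk, inv_smul_smul]⟩
  have hrep₂ : ∀ y : Y₂, ∃ (k : K) (c : C₂), y = k • (c : Y₂) := by
    intro y
    obtain ⟨c, ⟨hc, k, hk⟩, -⟩ := hC₂ y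
    exact ⟨k⁻¹, ⟨c, hc⟩, by rw [Subtype.coe_mk, ← hk, inv_smul_smul]⟩
  have left : Function.LeftInverse Ψ Φ := by
    intro y
    obtain ⟨k, c, rfl⟩ := hrep₁ y
    rw [hΦ k c, hΨ k (φ c), φ.symm_apply_apply]
  have right : Function.RightInverse Ψ Φ := by
    intro y
    obtain ⟨k, c, rfl⟩ := hrep₂ y
    rw [hΨ k c, hΦ k (φ.symm c), φ.apply_symm_apply]
  let e : Y₁ ≃ Y₂ := ⟨Φ, Ψ, left, right⟩
  refine ⟨hΦc.homeoOfEquivCompactToT2 (f := e), ?_, ?_⟩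
  · intro k y
    obtain ⟨k', c, rfl⟩ := hrep₁ y
    show Φ (k • k' • (c : Y₁)) = k • Φ (k' • (c : Y₁))
    rw [smul_smul, hΦ (k * k') c, hΦ k' c, mul_smul]
  · intro c
    have := hΦ 1 c
    rw [one_smul, one_smul] at this
    exact this
end

section
/- Let W be a finite reflection group acting on a euclidean vector space V with V^W = 0, let Δ ⊂ V be a closed Weyl chamber, and let l ∈ V* be a linear functional that is maximal on W-orbits at points of Δ (i.e., l belongs to the dual chamber Δ*). If λ ∈ Δ* satisfies λ(x) ≤ 1 for all x ∈ Δ ∩ B, where B = {x ∈ V : l(wx) ≤ 1 for all w ∈ W}, then λ(x) ≤ 1 for all x ∈ B, i.e., λ ∈ B*. -/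
/-- Let `W` be a finite reflection group acting on a euclidean vector space `V` with `V^W = 0`,
let `Δ ⊂ V` be a closed Weyl chamber (a closed convex fundamental cone for the action), and let
`l ∈ V*` be maximal on `W`-orbits at points of `Δ` (i.e. `l` lies in the dual chamber `Δ*`).
If `λ ∈ Δ*` satisfies `λ(x) ≤ 1` for all `x ∈ Δ ∩ B`, where
`B = {x ∈ V : l(wx) ≤ 1 for all w ∈ W}`, then `λ(x) ≤ 1` for all `x ∈ B`, i.e. `λ ∈ B*`. -/
theorem stmt_5 {V : Type*} [NormedAddCommGroup V] [InnerProductSpace ℝ V]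
    [FiniteDimensional ℝ V]
    (W : Subgroup (V ≃ₗᵢ[ℝ] V)) [Finite W]
    (Δ : Set V) (hΔclosed : IsClosed Δ) (hΔconvex : Convex ℝ Δ)
    (hΔcone : ∀ x ∈ Δ, ∀ t : ℝ, 0 ≤ t → t • x ∈ Δ)
    (hfund : ∀ v : V, ∃ w ∈ W, w v ∈ Δ)
    (hfix : ∀ v : V, (∀ w ∈ W, w v = v) → v = 0)
    (l lam : V →ₗ[ℝ] ℝ)
    (hl : ∀ x ∈ Δ, ∀ w ∈ W, l (w x) ≤ l x)
    (hlam : ∀ x ∈ Δ, ∀ w ∈ W, lam (w x) ≤ lam x)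
    (hlam_le : ∀ x ∈ Δ, (∀ w ∈ W, l (w x) ≤ 1) → lam x ≤ 1) :
    ∀ x : V, (∀ w ∈ W, l (w x) ≤ 1) → lam x ≤ 1 := by
  intro x hx
  obtain ⟨w, hw, hwx⟩ := hfund x
  have h1 : lam x ≤ lam (w x) := by
    have := hlam (w x) hwx w⁻¹ (inv_mem hw)
    simpa using this
  have h2 : lam (w x) ≤ 1 := by
    refine hlam_le (w x) hwx fun u hu => ?_
    have := hx (u * w) (mul_mem hu hw)
    simpa using this
  exact h1.trans h2
end

section
/- Let Z be a Hausdorff space with a closed decomposition R, let Z' ⊆ Z be the union of all non-singleton equivalence classes, and suppose Z' is closed in Z. Let R' be the restriction of R to Z'. Then R is upper semicontinuous if and only if R' is upper semicontinuous (as a decomposition of Z'). -/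
private lemma aux_mem {Z : Type*} {r : Z → Z → Prop} (hr : Equivalence r) {z w : Z}
    (hz : z ∈ {z : Z | ∃ y, r y z ∧ y ≠ z}) (hw : r w z) :
    w ∈ {z : Z | ∃ y, r y z ∧ y ≠ z} := by
  obtain ⟨y, hy, hyz⟩ := hz
  by_cases hwz : w = z
  · exact ⟨y, by rwa [hwz], by rwa [hwz]⟩
  · exact ⟨z, hr.symm hw, Ne.symm hwz⟩

private lemma aux_sing {Z : Type*} {r : Z → Z → Prop} {z y : Z}
    (hz : z ∉ {z : Z | ∃ y, r y z ∧ y ≠ z}) (hy : r y z) : y = z := by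
  by_contra hne
  exact hz ⟨y, hy, hne⟩

/-- Let `Z` be a Hausdorff space with a closed decomposition given by the equivalence relation
`r`, let `Z' ⊆ Z` be the union of all non-singleton equivalence classes, and suppose `Z'` is
closed in `Z`.  Then `r` is upper semicontinuous (as a decomposition of `Z`) iff its restriction
to `Z'` is upper semicontinuous (as a decomposition of `Z'`). -/
theorem stmt_13 {Z : Type*} [TopologicalSpace Z] [T2Space Z]
    (r : Z → Z → Prop) (hr : Equivalence r)
    (hcl : ∀ z : Z, IsClosed {y | r y z})
    (hZ' : IsClosed {z : Z | ∃ y, r y z ∧ y ≠ z}) :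
    (∀ (z : Z) (U : Set Z), IsOpen U → {y | r y z} ⊆ U →
        ∃ V : Set Z, IsOpen V ∧ {y | r y z} ⊆ V ∧
          ∀ z' : Z, ({y | r y z'} ∩ V).Nonempty → {y | r y z'} ⊆ U) ↔
      (∀ (z : {z : Z | ∃ y, r y z ∧ y ≠ z}) (U : Set {z : Z | ∃ y, r y z ∧ y ≠ z}),
        IsOpen U → {y | r (y : Z) (z : Z)} ⊆ U →
          ∃ V : Set {z : Z | ∃ y, r y z ∧ y ≠ z}, IsOpen V ∧
            {y | r (y : Z) (z : Z)} ⊆ V ∧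
            ∀ z' : {z : Z | ∃ y, r y z ∧ y ≠ z},
              ({y | r (y : Z) (z' : Z)} ∩ V).Nonempty → {y | r (y : Z) (z' : Z)} ⊆ U) := by
  set S : Set Z := {z : Z | ∃ y, r y z ∧ y ≠ z} with hS
  constructor
  · -- forward: usc on Z implies usc on Z'
    intro h z U hU hsub
    obtain ⟨W, hWopen, hWU⟩ := isOpen_induced_iff.mp hU
    have hclass : {y : Z | r y (z : Z)} ⊆ W ∪ Sᶜ := by
      intro y hy
      obtain ⟨u, huU, rfl⟩ := hsub hy
      left
      rw [← hWU] at huU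
      exact huU
    obtain ⟨V, hVopen, hVsub, hVprop⟩ := h z (W ∪ Sᶜ)
      (hWopen.union hZ'.isOpen_compl) hclass
    refine ⟨(↑) ⁻¹' V, hVopen.preimage continuous_subtype_val, ?_, ?_⟩
    · intro y hy
      exact ⟨⟨y, aux_mem hr z.2 hy⟩, hVsub hy, rfl⟩
    · rintro z' ⟨w, hw1, u, hu, rfl⟩
      have hne : ({y : Z | r y (z' : Z)} ∩ V).Nonempty := ⟨u, hw1, hu⟩
      have hsub2 := hVprop z' hne
      intro y hy
      have hyS : y ∈ S := aux_mem hr z'.2 hy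
      rcases hsub2 hy with h1 | h2
      · refine ⟨⟨y, hyS⟩, ?_, rfl⟩
        rw [← hWU]
        exact h1
      · exact absurd hyS h2
  · -- backward
    intro h z U hU hsub
    by_cases hz : z ∈ S
    · -- nonsingleton class
      obtain ⟨V', hV'open, hV'sub, hV'prop⟩ := h ⟨z, hz⟩ ((↑) ⁻¹' U)
        (hU.preimage continuous_subtype_val)
        (fun y hy => ⟨⟨y, aux_mem hr hz hy⟩, hsub hy, rfl⟩)
      obtain ⟨W, hWopen, hWV⟩ := isOpen_induced_iff.mp hV'open
      refine ⟨(W ∩ U) ∪ (U ∩ Sᶜ), (hWopen.inter hU).union (hU.inter hZ'.isOpen_compl),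
        ?_, ?_⟩
      · intro y hy
        obtain ⟨u, hu, rfl⟩ := hV'sub hy
        rw [← hWV] at hu
        exact Or.inl ⟨hu, hsub hy⟩
      · rintro z' ⟨w, hw1, hw2⟩
        have hsingle : w ∉ S → w ∈ U → {y : Z | r y z'} ⊆ U := by
          intro hwS hwU y hy
          have hyw : r y w := hr.trans hy (hr.symm hw1)
          have := aux_sing hwS hyw
          rw [this]; exact hwU
        rcases hw2 with ⟨hwW, hwU⟩ | ⟨hwU, hwS⟩
        · by_cases hwS : w ∈ S
          · intro y hy
            have hyw : r y w := hr.trans hy (hr.symm hw1)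
            have hyS : y ∈ S := aux_mem hr hwS hyw
            have hmem : (⟨w, hwS⟩ : S) ∈ V' := by
              rw [← hWV]; exact hwW
            have hne : ({u : Z | r u ((⟨w, hwS⟩ : S) : Z)} ∩
                (Subtype.val '' V')).Nonempty :=
              ⟨w, hr.refl w, ⟨w, hwS⟩, hmem, rfl⟩
            obtain ⟨u, hu, huy⟩ := hV'prop ⟨w, hwS⟩ hne hyw
            rw [← huy]
            exact hu
          · exact hsingle hwS hwU
        · exact hsingle hwS hwU
    · -- singleton class of z
      refine ⟨U ∩ Sᶜ, hU.inter hZ'.isOpen_compl, ?_, ?_⟩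
      · intro y hy
        have := aux_sing hz hy
        subst this
        exact ⟨hsub (hr.refl y), hz⟩
      · rintro z' ⟨w, hw1, hwU, hwS⟩
        intro y hy
        have hyw : r y w := hr.trans hy (hr.symm hw1)
        have := aux_sing hwS hyw
        rw [this]; exact hwU
end
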